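/- Let S be a vertex subset of a finite graph G achieving the maximum deficiency df(S) = od(S) - |S|, and among such sets minimizing Df(S), the total number of vertices in S-components without a perfect matching. Then every even S-component has a perfect matching. -/

import Mathlib

open SimpleGraph Set

variable {V : Type*} [Fintype V] [DecidableEq V]

/-- The vertex set (in `V`) of a connected component of the graph induced on `B`. -/
def compSupp (G : SimpleGraph V) (B : Set V)
    (c : (G.induce B).ConnectedComponent) : Set V :=
  Subtype.val '' c.supp

/-- `A` is (the vertex set of) a connected component of `G` restricted to `B`. -/
def IsCompOf (G : SimpleGraph V) (B : Set V) (A : Set V) : Prop :=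
  ∃ c : (G.induce B).ConnectedComponent, A = compSupp G B c

/-- The number of odd connected components of `G` restricted to `B`. -/
noncomputable def oddComps (G : SimpleGraph V) (B : Set V) : ℕ :=
  Set.ncard {c : (G.induce B).ConnectedComponent | Odd (compSupp G B c).ncard}

/-- The deficiency `df(S) = od(S) - |S|`. -/
noncomputable def df (G : SimpleGraph V) (S : Set V) : ℤ :=
  (oddComps G Sᶜ : ℤ) - S.ncard

/-- The induced subgraph on `A` has a perfect matching. -/
def HasPM (G : SimpleGraph V) (A : Set V) : Prop :=
  ∃ M : Subgraph (G.induce A), M.IsPerfectMatching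

/-- `Df(S)`: total number of vertices in components of `G - S` with no perfect matching. -/
noncomputable def Df (G : SimpleGraph V) (S : Set V) : ℕ :=
  Set.ncard (⋃ c ∈ {c : (G.induce Sᶜ).ConnectedComponent |
    ¬ HasPM G (compSupp G Sᶜ c)}, compSupp G Sᶜ c)

/-- The set of `M`-exposed vertices. -/
def exposed (G : SimpleGraph V) (M : Subgraph G) : Set V :=
  {v | v ∉ M.support}

/-- `A` induces a factor-critical graph. -/
def FactorCritical (G : SimpleGraph V) (A : Set V) : Prop :=
  ∀ v ∈ A, HasPM G (A \ {v})

/-- The neighborhood of `T ⊆ S` in the bipartite minor `⟨G,S⟩`: the odd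
`S`-components adjacent to some vertex of `T`. -/
def minorNbhd (G : SimpleGraph V) (S T : Set V) :
    Set (G.induce Sᶜ).ConnectedComponent :=
  {c | Odd (compSupp G Sᶜ c).ncard ∧ ∃ u ∈ T, ∃ w ∈ compSupp G Sᶜ c, G.Adj u w}

/-- `S` is a Gallai-Edmonds set of `G`. -/
def GallaiEdmonds (G : SimpleGraph V) (S : Set V) : Prop :=
  (∀ c : (G.induce Sᶜ).ConnectedComponent,
      Even (compSupp G Sᶜ c).ncard → HasPM G (compSupp G Sᶜ c)) ∧
  (∀ c : (G.induce Sᶜ).ConnectedComponent,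
      Odd (compSupp G Sᶜ c).ncard → FactorCritical G (compSupp G Sᶜ c)) ∧
  (∀ T ⊆ S, T.Nonempty → T.ncard + 1 ≤ (minorNbhd G S T).ncard)

/-- `w` and `w'` lie in the same `S`-component. -/
def SameComp (G : SimpleGraph V) (S : Set V) (w w' : V) : Prop :=
  ∃ c : (G.induce Sᶜ).ConnectedComponent,
    w ∈ compSupp G Sᶜ c ∧ w' ∈ compSupp G Sᶜ c

/-- `M` is a maximum matching of `G`. -/
def IsMaximumMatching (G : SimpleGraph V) (M : Subgraph G) : Prop :=
  M.IsMatching ∧ ∀ M' : Subgraph G, M'.IsMatching →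
    M'.edgeSet.ncard ≤ M.edgeSet.ncard
section Auxiliary

variable {G : SimpleGraph V}

lemma mem_compSupp {B : Set V} {c : (G.induce B).ConnectedComponent} {x : V} :
    x ∈ compSupp G B c ↔
      ∃ hx : x ∈ B, (G.induce B).connectedComponentMk ⟨x, hx⟩ = c := by
  constructor
  · rintro ⟨a, ha, rfl⟩
    exact ⟨a.2, ha⟩
  · rintro ⟨hx, h⟩
    exact ⟨⟨x, hx⟩, h, rfl⟩

lemma compSupp_nonempty {B : Set V} (c : (G.induce B).ConnectedComponent) :
    (compSupp G B c).Nonempty := by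
  obtain ⟨a, ha⟩ := c.exists_rep
  exact ⟨a.1, a, ha, rfl⟩

lemma compSupp_subset {B : Set V} (c : (G.induce B).ConnectedComponent) :
    compSupp G B c ⊆ B := by
  rintro x ⟨a, _, rfl⟩
  exact a.2

lemma compSupp_injective {B : Set V} :
    Function.Injective (compSupp G B) := by
  intro c c' h
  obtain ⟨x, hx⟩ := compSupp_nonempty (G := G) c
  have hx' : x ∈ compSupp G B c' := h ▸ hx
  rw [mem_compSupp] at hx hx'
  obtain ⟨h1, h2⟩ := hx
  obtain ⟨h1', h2'⟩ := hx'
  rw [← h2, ← h2']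

lemma compSupp_pairwise_disjoint {B : Set V} {c c' : (G.induce B).ConnectedComponent}
    (h : c ≠ c') : Disjoint (compSupp G B c) (compSupp G B c') := by
  rw [Set.disjoint_left]
  rintro x hx hx'
  rw [mem_compSupp] at hx hx'
  obtain ⟨h1, h2⟩ := hx
  obtain ⟨h1', h2'⟩ := hx'
  exact h (by rw [← h2, ← h2'])

/-- Lift a walk in `G.induce A` avoiding `v` to a walk in `G.induce (A \ {v})`. -/
lemma reachable_lift {A : Set V} {v : V} :
    ∀ {a b : ↥A} (p : (G.induce A).Walk a b),
      (∀ y ∈ p.support, (y : V) ≠ v) →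
      ∀ (ha : (a : V) ∈ A \ {v}) (hb : (b : V) ∈ A \ {v}),
      (G.induce (A \ {v})).Reachable ⟨a, ha⟩ ⟨b, hb⟩
  | _, _, SimpleGraph.Walk.nil, _, _, _ => Reachable.refl _
  | a, b, @SimpleGraph.Walk.cons _ _ _ w _ hadj p, h, ha, hb => by
    have hw : (w : V) ∈ A \ {v} :=
      ⟨w.2, h w (by simp [SimpleGraph.Walk.support_cons])⟩
    have h1 : (G.induce (A \ {v})).Adj ⟨a, ha⟩ ⟨w, hw⟩ := by
      simpa [SimpleGraph.comap_adj] using hadj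
    exact h1.reachable.trans
      (reachable_lift p (fun y hy => h y (by simp [SimpleGraph.Walk.support_cons, hy])) hw hb)

/-- The inclusion homomorphism `G.induce (A \ {v}) →g G.induce A`. -/
def incHom (G : SimpleGraph V) (A : Set V) (v : V) :
    G.induce (A \ {v}) →g G.induce A where
  toFun x := ⟨x.1, x.2.1⟩
  map_rel' h := h

lemma compSupp_subset_map {A : Set V} {v : V}
    (d : (G.induce (A \ {v})).ConnectedComponent) :
    compSupp G (A \ {v}) d ⊆ compSupp G A (d.map (incHom G A v)) := by
  rintro x ⟨a, ha, rfl⟩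
  rw [SimpleGraph.ConnectedComponent.mem_supp_iff] at ha
  refine ⟨incHom G A v a, ?_, rfl⟩
  rw [SimpleGraph.ConnectedComponent.mem_supp_iff, ← ha,
    SimpleGraph.ConnectedComponent.map_mk]

lemma compSupp_map_eq {A : Set V} {v : V} (hvA : v ∈ A)
    (d : (G.induce (A \ {v})).ConnectedComponent)
    (hd : d.map (incHom G A v) ≠ (G.induce A).connectedComponentMk ⟨v, hvA⟩) :
    compSupp G (A \ {v}) d = compSupp G A (d.map (incHom G A v)) := by
  apply Set.Subset.antisymm (compSupp_subset_map d)
  rintro x ⟨a, ha, rfl⟩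
  rw [SimpleGraph.ConnectedComponent.mem_supp_iff] at ha
  -- `a : ↥A` lies in the component `d.map ...`, which is not the component of `v`.
  obtain ⟨y, hy0⟩ := d.exists_rep
  have hy : (G.induce (A \ {v})).connectedComponentMk y = d := hy0
  have hy' : (G.induce A).connectedComponentMk (incHom G A v y) = d.map (incHom G A v) := by
    rw [← hy, SimpleGraph.ConnectedComponent.map_mk]
  have hreach : (G.induce A).Reachable a (incHom G A v y) :=
    SimpleGraph.ConnectedComponent.exact (ha.trans hy'.symm)
  obtain ⟨p⟩ := hreach
  have hsupp : ∀ z ∈ p.support, (z : V) ≠ v := by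
    intro z hz hzv
    have hz' : (G.induce A).connectedComponentMk z = (G.induce A).connectedComponentMk a :=
      SimpleGraph.ConnectedComponent.sound (p.takeUntil z hz).reachable.symm
    apply hd
    rw [← ha, ← hz']
    congr 1
    exact Subtype.ext hzv
  have haA : (a : V) ∈ A \ {v} := ⟨a.2, hsupp a p.start_mem_support⟩
  have hyA : ((incHom G A v y : ↥A) : V) ∈ A \ {v} := ⟨(incHom G A v y).2, hsupp _ p.end_mem_support⟩
  have hr : (G.induce (A \ {v})).Reachable ⟨(a : V), haA⟩ ⟨((incHom G A v y : ↥A) : V), hyA⟩ :=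
    reachable_lift p hsupp haA hyA
  have hmk : (G.induce (A \ {v})).connectedComponentMk ⟨(a : V), haA⟩ = d := by
    have : (⟨((incHom G A v y : ↥A) : V), hyA⟩ : ↥(A \ {v})) = y := Subtype.ext rfl
    rw [SimpleGraph.ConnectedComponent.sound hr, this, hy]
  exact ⟨⟨(a : V), haA⟩, hmk, rfl⟩

lemma even_ncard_biUnion {ι : Type*} {s : Set ι} (hs : s.Finite) {f : ι → Set V} :
    (∀ i ∈ s, ∀ j ∈ s, i ≠ j → Disjoint (f i) (f j)) →
    (∀ i ∈ s, Even (f i).ncard) →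
    Even (⋃ i ∈ s, f i).ncard := by
  refine Set.Finite.induction_on (motive := fun s _ =>
    (∀ i ∈ s, ∀ j ∈ s, i ≠ j → Disjoint (f i) (f j)) →
    (∀ i ∈ s, Even (f i).ncard) → Even (⋃ i ∈ s, f i).ncard) s hs (by simp) ?_
  intro a s ha hsfin ih hdisj heven
  rw [Set.biUnion_insert]
  have hdisj' : Disjoint (f a) (⋃ i ∈ s, f i) := by
    rw [Set.disjoint_iUnion₂_right]
    intro i hi
    exact hdisj a (Set.mem_insert _ _) i (Set.mem_insert_of_mem _ hi)
      (fun h => ha (h ▸ hi))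
  rw [Set.ncard_union_eq hdisj' (Set.toFinite _) (Set.toFinite _)]
  exact (heven a (Set.mem_insert _ _)).add
    (ih (fun i hi j hj hij => hdisj i (Set.mem_insert_of_mem _ hi)
      j (Set.mem_insert_of_mem _ hj) hij)
      (fun i hi => heven i (Set.mem_insert_of_mem _ hi)))

end Auxiliary

/-- If `S` maximizes `df` and, among such sets, minimizes `Df`, then every even
`S`-component has a perfect matching. -/
theorem stmt_3 (G : SimpleGraph V) (S : Set V)
    (hmax : ∀ T : Set V, df G T ≤ df G S)
    (hmin : ∀ T : Set V, df G T = df G S → Df G S ≤ Df G T) :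
    ∀ c : (G.induce Sᶜ).ConnectedComponent,
      Even (compSupp G Sᶜ c).ncard → HasPM G (compSupp G Sᶜ c) := by
  classical
  intro c hc
  by_contra hPM
  -- pick a vertex `v` in the component `c`
  obtain ⟨v, hvC⟩ := compSupp_nonempty (G := G) c
  have hvA : v ∈ Sᶜ := compSupp_subset c hvC
  have hvmk : (G.induce Sᶜ).connectedComponentMk ⟨v, hvA⟩ = c := by
    rw [mem_compSupp] at hvC
    obtain ⟨h1, h2⟩ := hvC
    exact h2
  have hvC' : v ∈ compSupp G Sᶜ c := by
    exact ⟨⟨v, hvA⟩, hvmk, rfl⟩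
  have hvS : v ∉ S := hvA
  set S' : Set V := insert v S with hS'def
  have hcompl : S'ᶜ = Sᶜ \ {v} := by
    rw [hS'def]
    ext x
    simp only [Set.mem_compl_iff, Set.mem_insert_iff, Set.mem_diff, Set.mem_singleton_iff]
    tauto
  set φ : (G.induce (Sᶜ \ {v})).ConnectedComponent → (G.induce Sᶜ).ConnectedComponent :=
    fun d => d.map (incHom G Sᶜ v) with hφdef
  -- components mapping to something other than `c` keep the same support
  have hkeep : ∀ d, φ d ≠ c → compSupp G (Sᶜ \ {v}) d = compSupp G Sᶜ (φ d) := by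
    intro d hd
    exact compSupp_map_eq hvA d (by rwa [hvmk])
  -- every element of `Sᶜ \ {v}` is in the support of its own component
  have hself : ∀ x (hx : x ∈ Sᶜ \ {v}),
      x ∈ compSupp G (Sᶜ \ {v}) ((G.induce (Sᶜ \ {v})).connectedComponentMk ⟨x, hx⟩) :=
    fun x hx => ⟨⟨x, hx⟩, rfl, rfl⟩
  have hselfφ : ∀ x (hx : x ∈ Sᶜ \ {v}),
      φ ((G.induce (Sᶜ \ {v})).connectedComponentMk ⟨x, hx⟩) =
        (G.induce Sᶜ).connectedComponentMk ⟨x, hx.1⟩ := by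
    intro x hx
    rw [hφdef]
    exact SimpleGraph.ConnectedComponent.map_mk _ _
  -- Step 1 : there exists an odd component of `C - v`
  have hodd_exists : ∃ d, Odd (compSupp G (Sᶜ \ {v}) d).ncard ∧ φ d = c := by
    by_contra hcon
    push_neg at hcon
    have heq : compSupp G Sᶜ c \ {v} =
        ⋃ d ∈ {d | φ d = c}, compSupp G (Sᶜ \ {v}) d := by
      ext x
      simp only [Set.mem_iUnion, Set.mem_setOf_eq, exists_prop]
      constructor
      · rintro ⟨hxC, hxv⟩
        have hx : x ∈ Sᶜ \ {v} := ⟨compSupp_subset c hxC, hxv⟩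
        refine ⟨(G.induce (Sᶜ \ {v})).connectedComponentMk ⟨x, hx⟩, ?_, hself x hx⟩
        rw [hselfφ x hx]
        rw [mem_compSupp] at hxC
        obtain ⟨h1, h2⟩ := hxC
        exact h2
      · rintro ⟨d, hd, hxd⟩
        have h1 : x ∈ compSupp G Sᶜ (φ d) := compSupp_subset_map d hxd
        rw [hd] at h1
        exact ⟨h1, fun hxv => ((compSupp_subset d hxd).2 : x ∉ {v}) hxv⟩
    have heven2 : Even (compSupp G Sᶜ c \ {v}).ncard := by
      rw [heq]
      apply even_ncard_biUnion (Set.toFinite _)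
      · intro i hi j hj hij
        exact compSupp_pairwise_disjoint hij
      · intro d hd
        rcases Nat.even_or_odd (compSupp G (Sᶜ \ {v}) d).ncard with h | h
        · exact h
        · exact absurd hd (by simpa using hcon d h)
    have hodd2 : Odd (compSupp G Sᶜ c \ {v}).ncard := by
      rw [Set.ncard_diff_singleton_of_mem hvC']
      refine Nat.Even.sub_odd ?_ hc odd_one
      exact (Set.ncard_pos (Set.toFinite _)).mpr ⟨v, hvC'⟩
    exact (Nat.not_odd_iff_even.mpr heven2) hodd2
  obtain ⟨d₀, hd₀odd, hd₀c⟩ := hodd_exists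
  -- Step 2 : `oddComps G (Sᶜ \ {v}) ≥ oddComps G Sᶜ + 1`
  have hInj : Set.InjOn φ {d | Odd (compSupp G (Sᶜ \ {v}) d).ncard ∧ φ d ≠ c} := by
    intro d1 h1 d2 h2 h12
    apply compSupp_injective (B := Sᶜ \ {v})
    rw [hkeep d1 h1.2, hkeep d2 h2.2, h12]
  have hImg : φ '' {d | Odd (compSupp G (Sᶜ \ {v}) d).ncard ∧ φ d ≠ c} =
      {c' | Odd (compSupp G Sᶜ c').ncard} := by
    ext c'
    simp only [Set.mem_image, Set.mem_setOf_eq]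
    constructor
    · rintro ⟨d, ⟨hdo, hdne⟩, rfl⟩
      rwa [← hkeep d hdne]
    · intro hc'
      have hc'ne : c' ≠ c := by
        rintro rfl
        exact (Nat.not_odd_iff_even.mpr hc) hc'
      obtain ⟨a, hamk0⟩ := c'.exists_rep
      have hamk : (G.induce Sᶜ).connectedComponentMk a = c' := hamk0
      have hav : (a : V) ≠ v := by
        intro h
        apply hc'ne
        rw [← hamk, ← hvmk]
        congr 1
        exact Subtype.ext h
      have haA : (a : V) ∈ Sᶜ \ {v} := ⟨a.2, hav⟩
      refine ⟨(G.induce (Sᶜ \ {v})).connectedComponentMk ⟨(a : V), haA⟩, ⟨?_, ?_⟩, ?_⟩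
      · have hφa : φ ((G.induce (Sᶜ \ {v})).connectedComponentMk ⟨(a : V), haA⟩) = c' := by
          rw [hselfφ _ haA]
          rw [← hamk]
        rw [hkeep _ (hφa ▸ hc'ne), hφa]
        exact hc'
      · rw [hselfφ _ haA]
        have : (⟨(a : V), haA.1⟩ : ↥Sᶜ) = a := Subtype.ext rfl
        rw [this, hamk]
        exact hc'ne
      · rw [hselfφ _ haA]
        have : (⟨(a : V), haA.1⟩ : ↥Sᶜ) = a := Subtype.ext rfl
        rw [this, hamk]
  have hd₀notmem : d₀ ∉ {d | Odd (compSupp G (Sᶜ \ {v}) d).ncard ∧ φ d ≠ c} := by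
    intro h
    exact h.2 hd₀c
  have hsub : insert d₀ {d | Odd (compSupp G (Sᶜ \ {v}) d).ncard ∧ φ d ≠ c} ⊆
      {d | Odd (compSupp G (Sᶜ \ {v}) d).ncard} := by
    rintro d (rfl | hd)
    · exact hd₀odd
    · exact hd.1
  have hodd_ge : oddComps G Sᶜ + 1 ≤ oddComps G (Sᶜ \ {v}) := by
    have h1 : oddComps G Sᶜ =
        Set.ncard {d | Odd (compSupp G (Sᶜ \ {v}) d).ncard ∧ φ d ≠ c} := by
      rw [oddComps, ← hImg, Set.ncard_image_of_injOn hInj]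
    rw [h1, oddComps]
    calc Set.ncard {d | Odd (compSupp G (Sᶜ \ {v}) d).ncard ∧ φ d ≠ c} + 1
        = (insert d₀ {d | Odd (compSupp G (Sᶜ \ {v}) d).ncard ∧ φ d ≠ c}).ncard := by
          rw [Set.ncard_insert_of_notMem hd₀notmem (Set.toFinite _)]
      _ ≤ _ := Set.ncard_le_ncard hsub (Set.toFinite _)
  -- Step 3 : `df G S' = df G S`
  have hS'card : S'.ncard = S.ncard + 1 := by
    rw [hS'def, Set.ncard_insert_of_notMem hvS (Set.toFinite _)]
  have hdf' : df G S' = (oddComps G (Sᶜ \ {v}) : ℤ) - (S.ncard + 1) := by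
    rw [df, hcompl, hS'card]
    push_cast
    ring
  have hdfge : df G S ≤ df G S' := by
    rw [hdf', df]
    have := hodd_ge
    push_cast [Nat.cast_le.mpr this]
    omega
  have hdfeq : df G S' = df G S := le_antisymm (hmax S') hdfge
  -- Step 4 : `Df G S' < Df G S`
  have hDfS : Df G S = (compSupp G Sᶜ c ∪
      ⋃ c' ∈ {c' | ¬ HasPM G (compSupp G Sᶜ c') ∧ c' ≠ c}, compSupp G Sᶜ c').ncard := by
    rw [Df]
    congr 1
    ext x
    simp only [Set.mem_iUnion, Set.mem_setOf_eq, Set.mem_union, exists_prop]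
    constructor
    · rintro ⟨c', hc', hx⟩
      by_cases h : c' = c
      · exact Or.inl (h ▸ hx)
      · exact Or.inr ⟨c', ⟨hc', h⟩, hx⟩
    · rintro (hx | ⟨c', ⟨hc', _⟩, hx⟩)
      · exact ⟨c, hPM, hx⟩
      · exact ⟨c', hc', hx⟩
  have hDfS' : Df G S' ≤ ((compSupp G Sᶜ c ∪
      ⋃ c' ∈ {c' | ¬ HasPM G (compSupp G Sᶜ c') ∧ c' ≠ c}, compSupp G Sᶜ c') \ {v}).ncard := by
    rw [Df, hcompl]
    apply Set.ncard_le_ncard _ (Set.toFinite _)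
    rintro x hx
    simp only [Set.mem_iUnion, Set.mem_setOf_eq, exists_prop] at hx
    obtain ⟨d, hdnPM, hxd⟩ := hx
    have hxv : x ≠ v := fun h => ((compSupp_subset d hxd).2 : x ∉ {v}) h
    refine ⟨?_, hxv⟩
    by_cases h : φ d = c
    · exact Or.inl (h ▸ compSupp_subset_map d hxd)
    · refine Or.inr ?_
      simp only [Set.mem_iUnion, Set.mem_setOf_eq, exists_prop]
      refine ⟨φ d, ⟨?_, h⟩, (hkeep d h) ▸ hxd⟩
      rw [← hkeep d h]
      exact hdnPM
  have hvmem : v ∈ compSupp G Sᶜ c ∪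
      ⋃ c' ∈ {c' | ¬ HasPM G (compSupp G Sᶜ c') ∧ c' ≠ c}, compSupp G Sᶜ c' :=
    Or.inl hvC'
  have hDflt : Df G S' < Df G S := by
    rw [hDfS]
    exact lt_of_le_of_lt hDfS'
      (Set.ncard_diff_singleton_lt_of_mem hvmem (Set.toFinite _))
  exact absurd (hmin S' hdfeq) (by omega)
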